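/- Let G : ℝ → ℝ be bounded, increasing, and left-continuous with lim_{x→−∞} G(x) = 0, and define y(ξ) = sup{x : x + G(x) < ξ}. Then y is increasing and Lipschitz continuous with Lipschitz constant 1, i.e., 0 ≤ y(ξ₂) − y(ξ₁) ≤ ξ₂ − ξ₁ for all ξ₁ ≤ ξ₂. -/
import Mathlib

open MeasureTheory Set Filter

/-- For `G` bounded, increasing, left-continuous with `G → 0` at `−∞`, the function
`y(ξ) = sup{x : x + G(x) < ξ}` is increasing and `1`-Lipschitz:
`0 ≤ y(ξ₂) − y(ξ₁) ≤ ξ₂ − ξ₁` for all `ξ₁ ≤ ξ₂`. -/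
theorem lagrangian_char_lipschitz
    (G : ℝ → ℝ)
    (hbdd : ∃ M : ℝ, ∀ x, |G x| ≤ M)
    (hmono : Monotone G)
    (hleft : ∀ x : ℝ, ContinuousWithinAt G (Set.Iio x) x)
    (hlim : Tendsto G atBot (nhds 0))
    (y : ℝ → ℝ) (hy : ∀ ξ, y ξ = sSup {x : ℝ | x + G x < ξ}) :
    ∀ ξ₁ ξ₂ : ℝ, ξ₁ ≤ ξ₂ → 0 ≤ y ξ₂ - y ξ₁ ∧ y ξ₂ - y ξ₁ ≤ ξ₂ - ξ₁ := by
  obtain ⟨M, hM⟩ := hbdd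
  have hbdda : ∀ ξ : ℝ, BddAbove {x : ℝ | x + G x < ξ} := by
    intro ξ
    refine ⟨ξ + M, fun x hx => ?_⟩
    have h1 : -M ≤ G x := neg_le_of_abs_le (hM x)
    have : x + G x < ξ := hx
    linarith
  have hne : ∀ ξ : ℝ, ({x : ℝ | x + G x < ξ}).Nonempty := by
    intro ξ
    have h1 : Tendsto (fun x : ℝ => x + G x) atBot atBot := by
      apply tendsto_atBot_add_right_of_ge atBot M _ (fun x => le_of_abs_le (hM x))
      exact tendsto_id
    obtain ⟨x, hx⟩ := (h1.eventually (eventually_lt_atBot ξ)).exists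
    exact ⟨x, hx⟩
  intro ξ₁ ξ₂ hle
  constructor
  · rw [hy, hy, sub_nonneg]
    exact csSup_le_csSup (hbdda ξ₂) (hne ξ₁) (fun x hx => lt_of_lt_of_le hx hle)
  · rw [hy, hy, sub_le_iff_le_add]
    apply csSup_le (hne ξ₂)
    intro x hx
    have hx' : (x - (ξ₂ - ξ₁)) + G (x - (ξ₂ - ξ₁)) < ξ₁ := by
      have := hmono (show x - (ξ₂ - ξ₁) ≤ x by linarith)
      have : x + G x < ξ₂ := hx
      linarith [hmono (show x - (ξ₂ - ξ₁) ≤ x by linarith)]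
    have := le_csSup (hbdda ξ₁) hx'
    linarith
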